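/- arXiv:1804.03127 — 3 statements merged into one kernel-verified Lean document; each statement's English description precedes it below -/
import Mathlib

section
/- The function ψ(t,λ) = [cos²(t/2) − λ⁻⁴ sin²(t/2) + 2i sin(t/2)cos(t/2)] / √(cos²(t/2) + λ⁻⁴ sin²(t/2)), with λ ≥ 1, satisfies the linear equation ψ̈ + (1/4)(1 + 3(φ(t)+1)⁻⁴)ψ = 0 where φ(t) = −1 + √(λ² cos²(t/2) + λ⁻² sin²(t/2)), with ψ(0) = 1 and ψ̇(0) = i. -/
open Real Complex

noncomputable section

/-- Q(t) = cos²(t/2) + l⁻⁴ sin²(t/2) -/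
def s6Q (l t : ℝ) : ℝ := Real.cos (t/2)^2 + (l^4)⁻¹ * Real.sin (t/2)^2
/-- derivative of Q -/
def s6Q' (l t : ℝ) : ℝ := ((l^4)⁻¹ - 1) * (Real.sin (t/2) * Real.cos (t/2))
/-- second derivative of Q -/
def s6Q'' (l t : ℝ) : ℝ := ((l^4)⁻¹ - 1) * ((Real.cos (t/2)^2 - Real.sin (t/2)^2)/2)
/-- d = √Q -/
def s6d (l t : ℝ) : ℝ := Real.sqrt (s6Q l t)
/-- derivative of d -/
def s6d' (l t : ℝ) : ℝ := s6Q' l t / (2 * s6d l t)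
/-- second derivative of d -/
def s6d'' (l t : ℝ) : ℝ := (s6Q'' l t * (2 * s6d l t) - s6Q' l t * (2 * s6d' l t)) / (2 * s6d l t)^2
/-- numerator N -/
def s6N (l t : ℝ) : ℂ := ((Real.cos (t/2)^2 - (l^4)⁻¹ * Real.sin (t/2)^2 : ℝ) : ℂ)
    + 2 * (Real.sin (t/2) : ℂ) * (Real.cos (t/2) : ℂ) * Complex.I
/-- derivative of N -/
def s6N' (l t : ℝ) : ℂ :=
    ((-(1+(l^4)⁻¹) * (Real.sin (t/2) * Real.cos (t/2)) : ℝ) : ℂ)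
    + ((Real.cos (t/2)^2 - Real.sin (t/2)^2 : ℝ) : ℂ) * Complex.I
/-- second derivative of N -/
def s6N'' (l t : ℝ) : ℂ :=
    ((-(1+(l^4)⁻¹) * ((Real.cos (t/2)^2 - Real.sin (t/2)^2)/2) : ℝ) : ℂ)
    + ((-(2 * Real.sin (t/2) * Real.cos (t/2)) : ℝ) : ℂ) * Complex.I
/-- ψ' -/
def s6p (l t : ℝ) : ℂ := (s6N' l t * ((s6d l t : ℝ) : ℂ) - s6N l t * ((s6d' l t : ℝ) : ℂ))
    / ((s6d l t : ℝ) : ℂ)^2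

end

lemma s6_half (t : ℝ) : HasDerivAt (fun t : ℝ => t / 2) (1/2 : ℝ) t :=
  (hasDerivAt_id t).div_const 2

lemma s6_hs (t : ℝ) : HasDerivAt (fun t : ℝ => Real.sin (t/2)) (Real.cos (t/2) / 2) t := by
  have h := (Real.hasDerivAt_sin (t/2)).comp t (s6_half t)
  refine h.congr_deriv ?_
  ring

lemma s6_hc (t : ℝ) : HasDerivAt (fun t : ℝ => Real.cos (t/2)) (-Real.sin (t/2) / 2) t := by
  have h := (Real.hasDerivAt_cos (t/2)).comp t (s6_half t)
  refine h.congr_deriv ?_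
  ring

lemma s6_hQ (l t : ℝ) : HasDerivAt (s6Q l) (s6Q' l t) t := by
  have h := (((s6_hc t).pow 2)).add ((((s6_hs t).pow 2)).const_mul ((l^4)⁻¹))
  refine h.congr_deriv ?_
  simp only [s6Q']; push_cast; ring

lemma s6_hQ' (l t : ℝ) : HasDerivAt (s6Q' l) (s6Q'' l t) t := by
  have h := (((s6_hs t).mul (s6_hc t))).const_mul ((l^4)⁻¹ - 1)
  refine h.congr_deriv ?_
  simp only [s6Q'']; ring

lemma s6_Qpos (l : ℝ) (hl : 1 ≤ l) (t : ℝ) : 0 < s6Q l t := by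
  have h1 : Real.sin (t/2)^2 + Real.cos (t/2)^2 = 1 := Real.sin_sq_add_cos_sq _
  have hl4 : (1:ℝ) ≤ l^4 := one_le_pow₀ hl
  have ha : 0 < (l^4)⁻¹ := by positivity
  have ha1 : (l^4)⁻¹ ≤ 1 := inv_le_one_of_one_le₀ hl4
  have hc := sq_nonneg (Real.cos (t/2))
  have hs := sq_nonneg (Real.sin (t/2))
  simp only [s6Q]
  nlinarith [mul_nonneg (sub_nonneg.2 ha1) hc]

lemma s6_dpos (l : ℝ) (hl : 1 ≤ l) (t : ℝ) : 0 < s6d l t :=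
  Real.sqrt_pos.2 (s6_Qpos l hl t)

lemma s6_d2 (l : ℝ) (hl : 1 ≤ l) (t : ℝ) : s6d l t ^ 2 = s6Q l t :=
  Real.sq_sqrt (s6_Qpos l hl t).le

lemma s6_hd (l : ℝ) (hl : 1 ≤ l) (t : ℝ) : HasDerivAt (s6d l) (s6d' l t) t :=
  (s6_hQ l t).sqrt (s6_Qpos l hl t).ne'

lemma s6_hd' (l : ℝ) (hl : 1 ≤ l) (t : ℝ) : HasDerivAt (s6d' l) (s6d'' l t) t := by
  have hden : 2 * s6d l t ≠ 0 := by
    have := s6_dpos l hl t; positivity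
  exact (s6_hQ' l t).div ((s6_hd l hl t).const_mul 2) hden

lemma s6_hN (l t : ℝ) : HasDerivAt (s6N l) (s6N' l t) t := by
  have h1 : HasDerivAt (fun t : ℝ => ((Real.cos (t/2)^2 - (l^4)⁻¹ * Real.sin (t/2)^2 : ℝ) : ℂ))
      (((-(1+(l^4)⁻¹) * (Real.sin (t/2) * Real.cos (t/2)) : ℝ) : ℂ)) t := by
    refine HasDerivAt.ofReal_comp ?_
    have h := ((s6_hc t).pow 2).sub (((s6_hs t).pow 2).const_mul ((l^4)⁻¹))
    refine h.congr_deriv ?_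
    push_cast; ring
  have h2 : HasDerivAt (fun t : ℝ => 2 * ((Real.sin (t/2) : ℝ) : ℂ) * ((Real.cos (t/2) : ℝ) : ℂ) * Complex.I)
      ((2 * ((Real.cos (t/2)/2 : ℝ) : ℂ) * ((Real.cos (t/2) : ℝ) : ℂ)
        + 2 * ((Real.sin (t/2) : ℝ) : ℂ) * ((-Real.sin (t/2)/2 : ℝ) : ℂ)) * Complex.I) t := by
    exact ((((s6_hs t).ofReal_comp.const_mul 2).mul (s6_hc t).ofReal_comp)).mul_const Complex.I
  have h := h1.add h2
  refine h.congr_deriv ?_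
  simp only [s6N']; push_cast; ring

lemma s6_hN' (l t : ℝ) : HasDerivAt (s6N' l) (s6N'' l t) t := by
  have h1 : HasDerivAt (fun t : ℝ =>
      ((-(1+(l^4)⁻¹) * (Real.sin (t/2) * Real.cos (t/2)) : ℝ) : ℂ))
      ((-(1+(l^4)⁻¹) * ((Real.cos (t/2)^2 - Real.sin (t/2)^2)/2) : ℝ) : ℂ) t := by
    refine HasDerivAt.ofReal_comp ?_
    have h := (((s6_hs t).mul (s6_hc t))).const_mul (-(1+(l^4)⁻¹))
    refine h.congr_deriv ?_
    ring
  have h2 : HasDerivAt (fun t : ℝ => ((Real.cos (t/2)^2 - Real.sin (t/2)^2 : ℝ) : ℂ) * Complex.I)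
      (((-(2 * Real.sin (t/2) * Real.cos (t/2)) : ℝ) : ℂ) * Complex.I) t := by
    refine HasDerivAt.mul_const ?_ Complex.I
    refine HasDerivAt.ofReal_comp ?_
    have h := ((s6_hc t).pow 2).sub ((s6_hs t).pow 2)
    refine h.congr_deriv ?_
    push_cast; ring
  have h := h1.add h2
  exact h

set_option maxHeartbeats 1000000 in
lemma s6_core (s c a d : ℂ) (h2 : d^2 = c^2 + a*s^2) (h1 : s^2 + c^2 = 1) :
    4*((-(1+a) * ((c^2 - s^2)/2)) + (-(2*s*c))*Complex.I)*d^4 - 4*((-(1+a)*(s*c)) + (c^2-s^2)*Complex.I)*((a-1)*(s*c))*d^2 - 2*((c^2 - a*s^2) + 2*s*c*Complex.I)*((a-1)*((c^2-s^2)/2))*d^2 + 3*((c^2 - a*s^2) + 2*s*c*Complex.I)*((a-1)*(s*c))^2 + d^4*((c^2 - a*s^2) + 2*s*c*Complex.I) + 3*a*((c^2 - a*s^2) + 2*s*c*Complex.I) = 0 := by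
  linear_combination
    ((4*((-(1+a) * ((c^2 - s^2)/2)) + (-(2*s*c))*Complex.I)
      + ((c^2 - a*s^2) + 2*s*c*Complex.I)) * (d^2 + c^2 + a*s^2)
      - 4*((-(1+a)*(s*c)) + (c^2-s^2)*Complex.I)*((a-1)*(s*c))
      - 2*((c^2 - a*s^2) + 2*s*c*Complex.I)*((a-1)*((c^2-s^2)/2))) * h2
    + (a*(-3*c^2 - 3*c^4 - 6*Complex.I*s*c - 6*Complex.I*s*c^3 - 3*s^2*c^2
        - 6*Complex.I*s^3*c)
      + a^2*(3*s^2 + 3*s^2*c^2 + 3*s^4)) * h1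

set_option maxHeartbeats 1000000 in
lemma s6_keyrat (s c a d : ℂ) (hd : d ≠ 0) :
    -(d^4 * ((c^2 - a*s^2) + 2*s*c*Complex.I) + 3*a*((c^2 - a*s^2) + 2*s*c*Complex.I)) / (4*d^5)
    - ((((((-(1+a) * ((c^2 - s^2)/2)) + (-(2*s*c))*Complex.I) * d + ((-(1+a)*(s*c)) + (c^2-s^2)*Complex.I) * (((a-1)*(s*c))/(2*d))) - (((-(1+a)*(s*c)) + (c^2-s^2)*Complex.I) * (((a-1)*(s*c))/(2*d)) + ((c^2 - a*s^2) + 2*s*c*Complex.I) * ((((a-1)*((c^2-s^2)/2)) * (2*d) - ((a-1)*(s*c)) * (2*(((a-1)*(s*c))/(2*d)))) / (2*d)^2))) * d^2 - (((-(1+a)*(s*c)) + (c^2-s^2)*Complex.I) * d - ((c^2 - a*s^2) + 2*s*c*Complex.I) * (((a-1)*(s*c))/(2*d))) * (2 * d * (((a-1)*(s*c))/(2*d)))) / ((d^2)^2))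
    = -(4*((-(1+a) * ((c^2 - s^2)/2)) + (-(2*s*c))*Complex.I)*d^4 - 4*((-(1+a)*(s*c)) + (c^2-s^2)*Complex.I)*((a-1)*(s*c))*d^2 - 2*((c^2 - a*s^2) + 2*s*c*Complex.I)*((a-1)*((c^2-s^2)/2))*d^2 + 3*((c^2 - a*s^2) + 2*s*c*Complex.I)*((a-1)*(s*c))^2 + d^4*((c^2 - a*s^2) + 2*s*c*Complex.I) + 3*a*((c^2 - a*s^2) + 2*s*c*Complex.I)) / (4*d^5) := by
  have hDE : d * d⁻¹ = 1 := mul_inv_cancel₀ hd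
  linear_combination ((((-1/2)+(0)*Complex.I)*c^2*d^3*d⁻¹^4
            + ((-1/2)+(0)*Complex.I)*c^2*a^1*d^3*d⁻¹^4
            + ((-1/4)+(0)*Complex.I)*c^4*d^2*d⁻¹^5
            + ((1/4)+(0)*Complex.I)*c^4*a^1*d^2*d⁻¹^5
            + ((0)+(-2)*Complex.I)*s^1*c^1*d^3*d⁻¹^4
            + ((0)+(-1/2)*Complex.I)*s^1*c^3*d^2*d⁻¹^5
            + ((0)+(1/2)*Complex.I)*s^1*c^3*a^1*d^2*d⁻¹^5
            + ((1/2)+(0)*Complex.I)*s^2*d^3*d⁻¹^4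
            + ((1/2)+(0)*Complex.I)*s^2*a^1*d^3*d⁻¹^4
            + ((1/4)+(0)*Complex.I)*s^2*c^2*d^2*d⁻¹^5
            + ((-1/4)+(0)*Complex.I)*s^2*c^2*a^2*d^2*d⁻¹^5
            + ((-3/4)+(0)*Complex.I)*s^2*c^4*d⁻¹^5
            + ((-1/4)+(0)*Complex.I)*s^2*c^4*d^1*d⁻¹^6
            + ((3/2)+(0)*Complex.I)*s^2*c^4*a^1*d⁻¹^5
            + ((1/2)+(0)*Complex.I)*s^2*c^4*a^1*d^1*d⁻¹^6
            + ((-3/4)+(0)*Complex.I)*s^2*c^4*a^2*d⁻¹^5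
            + ((-1/4)+(0)*Complex.I)*s^2*c^4*a^2*d^1*d⁻¹^6
            + ((0)+(1/2)*Complex.I)*s^3*c^1*d^2*d⁻¹^5
            + ((0)+(-1/2)*Complex.I)*s^3*c^1*a^1*d^2*d⁻¹^5
            + ((0)+(-3/2)*Complex.I)*s^3*c^3*d⁻¹^5
            + ((0)+(-1/2)*Complex.I)*s^3*c^3*d^1*d⁻¹^6
            + ((0)+(3)*Complex.I)*s^3*c^3*a^1*d⁻¹^5
            + ((0)+(1)*Complex.I)*s^3*c^3*a^1*d^1*d⁻¹^6
            + ((0)+(-3/2)*Complex.I)*s^3*c^3*a^2*d⁻¹^5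
            + ((0)+(-1/2)*Complex.I)*s^3*c^3*a^2*d^1*d⁻¹^6
            + ((-1/4)+(0)*Complex.I)*s^4*a^1*d^2*d⁻¹^5
            + ((1/4)+(0)*Complex.I)*s^4*a^2*d^2*d⁻¹^5
            + ((3/4)+(0)*Complex.I)*s^4*c^2*a^1*d⁻¹^5
            + ((1/4)+(0)*Complex.I)*s^4*c^2*a^1*d^1*d⁻¹^6
            + ((-3/2)+(0)*Complex.I)*s^4*c^2*a^2*d⁻¹^5
            + ((-1/2)+(0)*Complex.I)*s^4*c^2*a^2*d^1*d⁻¹^6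
            + ((3/4)+(0)*Complex.I)*s^4*c^2*a^3*d⁻¹^5
            + ((1/4)+(0)*Complex.I)*s^4*c^2*a^3*d^1*d⁻¹^6)) * hDE

set_option maxHeartbeats 2000000 in
theorem stmt6 (l : ℝ) (hl : 1 ≤ l) :
    let φ : ℝ → ℝ := fun t => -1 + Real.sqrt (l ^ 2 * Real.cos (t / 2) ^ 2 + (l ^ 2)⁻¹ * Real.sin (t / 2) ^ 2)
    let ψ : ℝ → ℂ := fun t =>
      ((Real.cos (t / 2) ^ 2 - (l ^ 4)⁻¹ * Real.sin (t / 2) ^ 2 : ℝ)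
        + 2 * Real.sin (t / 2) * Real.cos (t / 2) * Complex.I)
      / ((Real.sqrt (Real.cos (t / 2) ^ 2 + (l ^ 4)⁻¹ * Real.sin (t / 2) ^ 2) : ℝ) : ℂ)
    ψ 0 = 1 ∧
      ∃ ψ' : ℝ → ℂ, ψ' 0 = Complex.I ∧
        ∀ t, HasDerivAt ψ (ψ' t) t ∧
          HasDerivAt ψ' (-((((1 : ℝ) / 4) * (1 + 3 * (((φ t + 1) ^ 4)⁻¹)) : ℝ) : ℂ) * ψ t) t := by
  intro φ ψ
  have hl0 : (0:ℝ) < l := lt_of_lt_of_le one_pos hl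
  have hl0' : l ≠ 0 := hl0.ne'
  have hψ : ψ = fun t => s6N l t / ((s6d l t : ℝ) : ℂ) := by
    funext t
    simp only [ψ, s6N, s6d, s6Q]
  constructor
  · rw [hψ]
    norm_num [s6N, s6d, s6Q]
  · refine ⟨s6p l, ?_, ?_⟩
    · norm_num [s6p, s6N, s6N', s6d, s6d', s6Q, s6Q']
    · intro t
      have hd0 : s6d l t ≠ 0 := (s6_dpos l hl t).ne'
      have hd0C : ((s6d l t : ℝ) : ℂ) ≠ 0 := by exact_mod_cast hd0
      constructor
      · rw [hψ]
        exact (s6_hN l t).div ((s6_hd l hl t).ofReal_comp) hd0C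
      · -- second derivative
        have hdenR : HasDerivAt (fun x : ℝ => s6d l x ^ 2) (2 * s6d l t * s6d' l t) t := by
          have h := (s6_hd l hl t).pow 2
          refine h.congr_deriv ?_
          push_cast
          ring
        have hden : HasDerivAt (fun x : ℝ => ((s6d l x : ℝ) : ℂ)^2)
            (((2 * s6d l t * s6d' l t : ℝ)) : ℂ) t := by
          have h := hdenR.ofReal_comp
          convert h using 1
          funext x; push_cast; ring
        have hnum : HasDerivAt (fun t => s6N' l t * ((s6d l t : ℝ) : ℂ) - s6N l t * ((s6d' l t : ℝ) : ℂ))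
            ((s6N'' l t * ((s6d l t : ℝ) : ℂ) + s6N' l t * ((s6d' l t : ℝ) : ℂ))
              - (s6N' l t * ((s6d' l t : ℝ) : ℂ) + s6N l t * ((s6d'' l t : ℝ) : ℂ))) t :=
          ((s6_hN' l t).mul (s6_hd l hl t).ofReal_comp).sub
            (((s6_hN l t).mul (s6_hd' l hl t).ofReal_comp))
        have hden0 : ((s6d l t : ℝ) : ℂ)^2 ≠ 0 := pow_ne_zero 2 hd0C
        have hE : HasDerivAt (s6p l)
            ((((s6N'' l t * ((s6d l t : ℝ) : ℂ) + s6N' l t * ((s6d' l t : ℝ) : ℂ))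
              - (s6N' l t * ((s6d' l t : ℝ) : ℂ) + s6N l t * ((s6d'' l t : ℝ) : ℂ)))
              * ((s6d l t : ℝ) : ℂ)^2
              - (s6N' l t * ((s6d l t : ℝ) : ℂ) - s6N l t * ((s6d' l t : ℝ) : ℂ))
                * (((2 * s6d l t * s6d' l t : ℝ)) : ℂ))
              / (((s6d l t : ℝ) : ℂ)^2)^2) t := hnum.div hden hden0
        convert hE using 1
        have hphi : φ t + 1 = l * s6d l t := by
          have harg : l ^ 2 * Real.cos (t / 2) ^ 2 + (l ^ 2)⁻¹ * Real.sin (t / 2) ^ 2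
              = l^2 * s6Q l t := by
            simp only [s6Q]
            field_simp
          simp only [φ, harg, s6d]
          rw [Real.sqrt_mul (sq_nonneg l), Real.sqrt_sq hl0.le]
          ring
        rw [hψ, hphi]
        have hpy : Real.sin (t/2)^2 + Real.cos (t/2)^2 = 1 := Real.sin_sq_add_cos_sq _
        have hpyC : ((Real.sin (t/2) : ℝ) : ℂ)^2 + ((Real.cos (t/2) : ℝ) : ℂ)^2 = 1 := by
          exact_mod_cast hpy
        have hd2C : ((s6d l t : ℝ) : ℂ)^2
            = ((Real.cos (t/2) : ℝ) : ℂ)^2 + ((((l : ℝ) : ℂ))^4)⁻¹ * ((Real.sin (t/2) : ℝ) : ℂ)^2 := by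
          have h := congrArg (fun x : ℝ => (x : ℂ)) (s6_d2 l hl t)
          simp only [s6Q] at h
          push_cast [-Complex.ofReal_cos, -Complex.ofReal_sin] at h
          exact h
        have hlC : ((l : ℝ) : ℂ) ≠ 0 := by exact_mod_cast hl0'
        refine Eq.trans (b := -(((s6d l t : ℝ) : ℂ)^4 * s6N l t
            + 3*((((l : ℝ) : ℂ))^4)⁻¹ * s6N l t) / (4*((s6d l t : ℝ) : ℂ)^5)) ?_ ?_
        · -- K-form equals X
          simp only [s6N]
          push_cast [-Complex.ofReal_cos, -Complex.ofReal_sin]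
          field_simp [hlC, hd0C]
        · -- X equals combinator derivative
          rw [← sub_eq_zero]
          have h₁ : -(((s6d l t : ℝ) : ℂ)^4 * s6N l t
                + 3*((((l : ℝ) : ℂ))^4)⁻¹ * s6N l t) / (4*((s6d l t : ℝ) : ℂ)^5)
              - ((((s6N'' l t * ((s6d l t : ℝ) : ℂ) + s6N' l t * ((s6d' l t : ℝ) : ℂ))
                - (s6N' l t * ((s6d' l t : ℝ) : ℂ) + s6N l t * ((s6d'' l t : ℝ) : ℂ)))
                * ((s6d l t : ℝ) : ℂ)^2
                - (s6N' l t * ((s6d l t : ℝ) : ℂ) - s6N l t * ((s6d' l t : ℝ) : ℂ))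
                  * (((2 * s6d l t * s6d' l t : ℝ)) : ℂ))
                / (((s6d l t : ℝ) : ℂ)^2)^2)
              = -(((s6d l t : ℝ) : ℂ)^4 * ((((Real.cos (t/2) : ℝ) : ℂ)^2 - ((((l : ℝ) : ℂ))^4)⁻¹*((Real.sin (t/2) : ℝ) : ℂ)^2) + 2*((Real.sin (t/2) : ℝ) : ℂ)*((Real.cos (t/2) : ℝ) : ℂ)*Complex.I) + 3*((((l : ℝ) : ℂ))^4)⁻¹*((((Real.cos (t/2) : ℝ) : ℂ)^2 - ((((l : ℝ) : ℂ))^4)⁻¹*((Real.sin (t/2) : ℝ) : ℂ)^2) + 2*((Real.sin (t/2) : ℝ) : ℂ)*((Real.cos (t/2) : ℝ) : ℂ)*Complex.I)) / (4*((s6d l t : ℝ) : ℂ)^5)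
                - ((((((-(1+((((l : ℝ) : ℂ))^4)⁻¹) * ((((Real.cos (t/2) : ℝ) : ℂ)^2 - ((Real.sin (t/2) : ℝ) : ℂ)^2)/2)) + (-(2*((Real.sin (t/2) : ℝ) : ℂ)*((Real.cos (t/2) : ℝ) : ℂ)))*Complex.I) * ((s6d l t : ℝ) : ℂ) + ((-(1+((((l : ℝ) : ℂ))^4)⁻¹)*(((Real.sin (t/2) : ℝ) : ℂ)*((Real.cos (t/2) : ℝ) : ℂ))) + (((Real.cos (t/2) : ℝ) : ℂ)^2-((Real.sin (t/2) : ℝ) : ℂ)^2)*Complex.I) * (((((((l : ℝ) : ℂ))^4)⁻¹-1)*(((Real.sin (t/2) : ℝ) : ℂ)*((Real.cos (t/2) : ℝ) : ℂ)))/(2*((s6d l t : ℝ) : ℂ)))) - (((-(1+((((l : ℝ) : ℂ))^4)⁻¹)*(((Real.sin (t/2) : ℝ) : ℂ)*((Real.cos (t/2) : ℝ) : ℂ))) + (((Real.cos (t/2) : ℝ) : ℂ)^2-((Real.sin (t/2) : ℝ) : ℂ)^2)*Complex.I) * (((((((l : ℝ) : ℂ))^4)⁻¹-1)*(((Real.sin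 (t/2) : ℝ) : ℂ)*((Real.cos (t/2) : ℝ) : ℂ)))/(2*((s6d l t : ℝ) : ℂ))) + ((((Real.cos (t/2) : ℝ) : ℂ)^2 - ((((l : ℝ) : ℂ))^4)⁻¹*((Real.sin (t/2) : ℝ) : ℂ)^2) + 2*((Real.sin (t/2) : ℝ) : ℂ)*((Real.cos (t/2) : ℝ) : ℂ)*Complex.I) * ((((((((l : ℝ) : ℂ))^4)⁻¹-1)*((((Real.cos (t/2) : ℝ) : ℂ)^2-((Real.sin (t/2) : ℝ) : ℂ)^2)/2)) * (2*((s6d l t : ℝ) : ℂ)) - ((((((l : ℝ) : ℂ))^4)⁻¹-1)*(((Real.sin (t/2) : ℝ) : ℂ)*((Real.cos (t/2) : ℝ) : ℂ))) * (2*(((((((l : ℝ) : ℂ))^4)⁻¹-1)*(((Real.sin (t/2) : ℝ) : ℂ)*((Real.cos (t/2) : ℝ) : ℂ)))/(2*((s6d l t : ℝ) : ℂ))))) / (2*((s6d l t : ℝ) : ℂ))^2))) * ((s6d l t : ℝ) : ℂ)^2 - (((-(1+((((l : ℝ) : ℂ))^4)⁻¹)*(((Real.sin (t/2) : ℝ)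 : ℂ)*((Real.cos (t/2) : ℝ) : ℂ))) + (((Real.cos (t/2) : ℝ) : ℂ)^2-((Real.sin (t/2) : ℝ) : ℂ)^2)*Complex.I) * ((s6d l t : ℝ) : ℂ) - ((((Real.cos (t/2) : ℝ) : ℂ)^2 - ((((l : ℝ) : ℂ))^4)⁻¹*((Real.sin (t/2) : ℝ) : ℂ)^2) + 2*((Real.sin (t/2) : ℝ) : ℂ)*((Real.cos (t/2) : ℝ) : ℂ)*Complex.I) * (((((((l : ℝ) : ℂ))^4)⁻¹-1)*(((Real.sin (t/2) : ℝ) : ℂ)*((Real.cos (t/2) : ℝ) : ℂ)))/(2*((s6d l t : ℝ) : ℂ)))) * (2 * ((s6d l t : ℝ) : ℂ) * (((((((l : ℝ) : ℂ))^4)⁻¹-1)*(((Real.sin (t/2) : ℝ) : ℂ)*((Real.cos (t/2) : ℝ) : ℂ)))/(2*((s6d l t : ℝ) : ℂ))))) / ((((s6d l t : ℝ) : ℂ)^2)^2)) := by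
            simp only [s6N, s6N', s6N'', s6d', s6d'', s6Q', s6Q'']
            push_cast [-Complex.ofReal_cos, -Complex.ofReal_sin]
            ring
          rw [h₁, s6_keyrat _ _ _ _ hd0C, s6_core _ _ _ _ hd2C hpyC, neg_zero, zero_div]
end

section
/- For the equation ẍ + x = λ/x³ with x > 0 and λ > 0, the function x(t) = √((x₀cos t + y₀ sin t)² + (λ/x₀²) sin² t) is the (globally defined, positive) solution with x(0) = x₀ > 0 and ẋ(0) = y₀. -/
open Real

theorem stmt16 (lam x₀ y₀ : ℝ) (hlam : 0 < lam) (hx₀ : 0 < x₀) :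
    let x : ℝ → ℝ := fun t =>
      Real.sqrt ((x₀ * Real.cos t + y₀ * Real.sin t) ^ 2 + (lam / x₀ ^ 2) * Real.sin t ^ 2)
    x 0 = x₀ ∧
      ∃ x' : ℝ → ℝ, x' 0 = y₀ ∧
        ∀ t, 0 < x t ∧ HasDerivAt x (x' t) t ∧
          HasDerivAt x' (lam / (x t) ^ 3 - x t) t := by
  intro x
  have hx0ne : x₀ ≠ 0 := ne_of_gt hx₀
  set c : ℝ := lam / x₀ ^ 2 with hc
  have hcpos : 0 < c := div_pos hlam (by positivity)
  have hclam : c * x₀ ^ 2 = lam := by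
    rw [hc, div_mul_cancel₀ _ (pow_ne_zero 2 hx0ne)]
  set u : ℝ → ℝ := fun t =>
      (x₀ * Real.cos t + y₀ * Real.sin t) ^ 2 + c * Real.sin t ^ 2 with hu_def
  have hu : ∀ t, 0 < u t := by
    intro t
    rcases eq_or_ne (Real.sin t) 0 with h | h
    · have hcos : Real.cos t ^ 2 = 1 := by
        have := Real.sin_sq_add_cos_sq t; nlinarith
      simp only [hu_def, h]
      nlinarith [sq_nonneg x₀]
    · simp only [hu_def]
      nlinarith [sq_nonneg (x₀ * Real.cos t + y₀ * Real.sin t),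
        (sq_nonneg (Real.sin t)).lt_of_ne' (pow_ne_zero 2 h)]
  have hx_eq : ∀ t, x t = Real.sqrt (u t) := fun t => rfl
  have hxpos : ∀ t, 0 < x t := fun t => Real.sqrt_pos.mpr (hu t)
  have hxne : ∀ t, x t ≠ 0 := fun t => ne_of_gt (hxpos t)
  have hxsq : ∀ t, (x t) ^ 2 = u t := fun t => Real.sq_sqrt (hu t).le
  set x' : ℝ → ℝ := fun t =>
      ((x₀ * Real.cos t + y₀ * Real.sin t) * (y₀ * Real.cos t - x₀ * Real.sin t)
        + c * (Real.sin t * Real.cos t)) / x t with hx'_def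
  have hA : ∀ t, HasDerivAt (fun s => x₀ * Real.cos s + y₀ * Real.sin s)
      (y₀ * Real.cos t - x₀ * Real.sin t) t := by
    intro t
    have := ((Real.hasDerivAt_cos t).const_mul x₀).add ((Real.hasDerivAt_sin t).const_mul y₀)
    exact this.congr_deriv (by ring)
  have hU : ∀ t, HasDerivAt u
      (2 * (x₀ * Real.cos t + y₀ * Real.sin t) * (y₀ * Real.cos t - x₀ * Real.sin t)
        + c * (2 * Real.sin t * Real.cos t)) t := by
    intro t
    have h1 := (hA t).pow 2
    have h2 := ((Real.hasDerivAt_sin t).pow 2).const_mul c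
    have := h1.add h2
    exact this.congr_deriv (by ring)
  have hxderiv : ∀ t, HasDerivAt x (x' t) t := by
    intro t
    have := (hU t).sqrt (ne_of_gt (hu t))
    convert this using 1
    have hs : Real.sqrt (u t) ≠ 0 := ne_of_gt (Real.sqrt_pos.mpr (hu t))
    rw [hx'_def]
    show _ / x t = _
    rw [hx_eq t]
    rw [show 2 * (x₀ * Real.cos t + y₀ * Real.sin t) * (y₀ * Real.cos t - x₀ * Real.sin t)
        + c * (2 * Real.sin t * Real.cos t)
        = 2 * ((x₀ * Real.cos t + y₀ * Real.sin t) * (y₀ * Real.cos t - x₀ * Real.sin t)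
        + c * (Real.sin t * Real.cos t)) by ring]
    rw [mul_div_mul_left _ _ (two_ne_zero)]
  have hzero : x 0 = x₀ := by
    rw [hx_eq 0]
    simp only [hu_def, Real.cos_zero, Real.sin_zero]
    rw [show (x₀ * 1 + y₀ * 0) ^ 2 + c * 0 ^ 2 = x₀ ^ 2 by ring]
    exact Real.sqrt_sq hx₀.le
  refine ⟨hzero, x', ?_, fun t => ⟨hxpos t, hxderiv t, ?_⟩⟩
  · rw [hx'_def]
    show _ / x 0 = _
    rw [hzero]
    simp only [Real.cos_zero, Real.sin_zero, mul_one, mul_zero, add_zero, sub_zero, zero_mul]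
    field_simp
  · have hN : HasDerivAt (fun s => (x₀ * Real.cos s + y₀ * Real.sin s) * (y₀ * Real.cos s - x₀ * Real.sin s)
        + c * (Real.sin s * Real.cos s))
        ((y₀ * Real.cos t - x₀ * Real.sin t) ^ 2 - (x₀ * Real.cos t + y₀ * Real.sin t) ^ 2
          + c * (Real.cos t ^ 2 - Real.sin t ^ 2)) t := by
      have hA' : HasDerivAt (fun s => y₀ * Real.cos s - x₀ * Real.sin s)
          (-(x₀ * Real.cos t + y₀ * Real.sin t)) t := by
        have := ((Real.hasDerivAt_cos t).const_mul y₀).sub ((Real.hasDerivAt_sin t).const_mul x₀)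
        exact this.congr_deriv (by ring)
      have h1 := (hA t).mul hA'
      have h2 := ((Real.hasDerivAt_sin t).mul (Real.hasDerivAt_cos t)).const_mul c
      have := h1.add h2
      exact this.congr_deriv (by ring)
    have hder := hN.div (hxderiv t) (hxne t)
    have hx't : x' t = ((x₀ * Real.cos t + y₀ * Real.sin t) * (y₀ * Real.cos t - x₀ * Real.sin t)
        + c * (Real.sin t * Real.cos t)) / x t := rfl
    refine hder.congr_deriv ?_
    rw [hx't]
    have hX := hxpos t
    have hX2 := hxsq t
    have pyth := Real.sin_sq_add_cos_sq t
    simp only [hu_def] at hX2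
    set X := x t with hXdef
    set C := Real.cos t
    set S := Real.sin t
    set A := x₀ * C + y₀ * S with hAdef
    set B := y₀ * C - x₀ * S with hBdef
    have hXne : X ≠ 0 := ne_of_gt hX
    have key : lam - X ^ 4 = (B ^ 2 - A ^ 2 + c * (C ^ 2 - S ^ 2)) * X ^ 2
        - (A * B + c * (S * C)) ^ 2 := by
      linear_combination (-((B ^ 2 - A ^ 2 + c * (C ^ 2 - S ^ 2)) + X ^ 2 + (A ^ 2 + c * S ^ 2))) * hX2
        - c * x₀ ^ 2 * (S ^ 2 + C ^ 2 + 1) * pyth - hclam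
    generalize hNp : B ^ 2 - A ^ 2 + c * (C ^ 2 - S ^ 2) = Np at key ⊢
    generalize hNN : A * B + c * (S * C) = N at key ⊢
    field_simp
    linear_combination -key
end

section
/- Define Φ_λ: D → D, D = (0,∞)×ℝ, by Φ_λ(x₀,y₀) = (x₀ φ_λ(x₀,y₀), −y₀/φ_λ(x₀,y₀)) with φ_λ(x₀,y₀) = √(y₀²/x₀² + λ/x₀⁴). Then the map P = Φ_c ∘ Φ₁ is given by P(x₀,y₀) = (x₀ Π(x₀,y₀), y₀/Π(x₀,y₀)) with Π(x₀,y₀) = √((x₀²y₀² + c)/(x₀²y₀² + 1)), and I(x₀,y₀) = x₀y₀ is a first integral: I(P(x₀,y₀)) = I(x₀,y₀). -/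
/-- Time-(π/2) map of the Ermakov–Pinney equation ẍ + x = λ/x³. -/
noncomputable def Phi (l : ℝ) (z : ℝ × ℝ) : ℝ × ℝ :=
  (z.1 * Real.sqrt (z.2 ^ 2 / z.1 ^ 2 + l / z.1 ^ 4),
    -z.2 / Real.sqrt (z.2 ^ 2 / z.1 ^ 2 + l / z.1 ^ 4))

/-- Π(x₀,y₀) = √((x₀²y₀²+c)/(x₀²y₀²+1)). -/
noncomputable def Pi' (c : ℝ) (z : ℝ × ℝ) : ℝ :=
  Real.sqrt ((z.1 ^ 2 * z.2 ^ 2 + c) / (z.1 ^ 2 * z.2 ^ 2 + 1))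

theorem stmt17 (c : ℝ) (hc : 0 < c) (x₀ y₀ : ℝ) (hx₀ : 0 < x₀) :
    Phi c (Phi 1 (x₀, y₀)) = (x₀ * Pi' c (x₀, y₀), y₀ / Pi' c (x₀, y₀)) ∧
    (x₀ * Pi' c (x₀, y₀)) * (y₀ / Pi' c (x₀, y₀)) = x₀ * y₀ := by
  have hx2 : (0:ℝ) < x₀ ^ 2 := by positivity
  have hA0 : (0:ℝ) ≤ x₀ ^ 2 * y₀ ^ 2 := by positivity
  have ha1 : (0:ℝ) < x₀ ^ 2 * y₀ ^ 2 + 1 := by linarith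
  have hb1 : (0:ℝ) < x₀ ^ 2 * y₀ ^ 2 + c := by linarith
  set a := Real.sqrt (x₀ ^ 2 * y₀ ^ 2 + 1) with ha'
  set b := Real.sqrt (x₀ ^ 2 * y₀ ^ 2 + c) with hb'
  have ha0 : 0 < a := Real.sqrt_pos.mpr ha1
  have hb0 : 0 < b := Real.sqrt_pos.mpr hb1
  have ha2 : a ^ 2 = x₀ ^ 2 * y₀ ^ 2 + 1 := Real.sq_sqrt ha1.le
  have hb2 : b ^ 2 = x₀ ^ 2 * y₀ ^ 2 + c := Real.sq_sqrt hb1.le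
  have hPi : Pi' c (x₀, y₀) = b / a := by
    rw [Pi']
    simp only
    rw [Real.sqrt_div hb1.le, ← ha', ← hb']
  have hs1 : Real.sqrt (y₀ ^ 2 / x₀ ^ 2 + 1 / x₀ ^ 4) = a / x₀ ^ 2 := by
    have : y₀ ^ 2 / x₀ ^ 2 + 1 / x₀ ^ 4 = (x₀ ^ 2 * y₀ ^ 2 + 1) / (x₀ ^ 2) ^ 2 := by
      field_simp
    rw [this, Real.sqrt_div ha1.le, Real.sqrt_sq hx2.le]
  have hPhi1 : Phi 1 (x₀, y₀) = (a / x₀, -y₀ * x₀ ^ 2 / a) := by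
    rw [Phi]
    simp only [hs1, Prod.mk.injEq]
    refine ⟨by field_simp, by field_simp⟩
  rw [hPhi1, hPi, Phi]
  have hs2 : Real.sqrt ((-y₀ * x₀ ^ 2 / a) ^ 2 / (a / x₀) ^ 2 + c / (a / x₀) ^ 4)
      = x₀ ^ 2 * b / a ^ 2 := by
    have harg : (-y₀ * x₀ ^ 2 / a) ^ 2 / (a / x₀) ^ 2 + c / (a / x₀) ^ 4
        = (x₀ ^ 4 * (x₀ ^ 2 * y₀ ^ 2 + c)) / (a ^ 2) ^ 2 := by
      have h4 : a ^ 4 = (x₀ ^ 2 * y₀ ^ 2 + 1) ^ 2 := by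
        rw [show (4:ℕ) = 2 * 2 from rfl, pow_mul, ha2]
      field_simp
    rw [harg, Real.sqrt_div (by positivity), Real.sqrt_sq (by positivity),
      Real.sqrt_mul (by positivity), ← hb',
      show (x₀ ^ 4) = (x₀ ^ 2) ^ 2 by ring, Real.sqrt_sq hx2.le]
  simp only [hs2]
  refine ⟨?_, ?_⟩
  · rw [Prod.mk.injEq]
    refine ⟨by field_simp, by field_simp⟩
  · field_simp
end
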